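/- Let X be a zero-dimensional Hausdorff space. The ring C(X, ℝ_disc) of continuous locally constant real functions is ℵ₀-self-injective if and only if X is a P-space, i.e., the field CO(X) of clopen sets is closed under countable unions. -/
import Mathlib

open Set Function

/-- A topological space is zero-dimensional if it has a basis of clopen sets. -/
def ZeroDimensional (X : Type*) [TopologicalSpace X] : Prop :=
  ∀ x : X, ∀ U : Set X, IsOpen U → x ∈ U → ∃ V : Set X, IsClopen V ∧ x ∈ V ∧ V ⊆ U

/-- A commutative ring `R` is `ℵ₀`-self-injective if every `R`-module homomorphism from a
countably generated ideal of `R` into `R` extends to a homomorphism `R → R`. -/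
def Aleph0SelfInjective (R : Type*) [CommRing R] : Prop :=
  ∀ I : Ideal R, (∃ S : Set R, S.Countable ∧ Ideal.span S = I) →
    ∀ φ : I →ₗ[R] R, ∃ Φ : R →ₗ[R] R, ∀ x : I, Φ (x : R) = φ x

section Aux

variable {X : Type*} [TopologicalSpace X]

lemma isLC_indicator {s : Set X} (hs : IsClopen s) {f : X → ℝ} (hf : IsLocallyConstant f) :
    IsLocallyConstant (s.indicator f) := by
  rw [IsLocallyConstant.iff_exists_open]
  intro x
  by_cases hx : x ∈ s
  · obtain ⟨U, hU, hxU, hUf⟩ := hf.exists_open x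
    refine ⟨U ∩ s, hU.inter hs.2, ⟨hxU, hx⟩, fun y hy => ?_⟩
    rw [Set.indicator_of_mem hy.2, Set.indicator_of_mem hx, hUf y hy.1]
  · refine ⟨sᶜ, hs.compl.2, hx, fun y hy => ?_⟩
    rw [Set.indicator_of_notMem hy, Set.indicator_of_notMem hx]

/-- The characteristic function of a clopen set as a locally constant function. -/
noncomputable def chi {s : Set X} (hs : IsClopen s) : LocallyConstant X ℝ :=
  ⟨s.indicator (fun _ => 1), isLC_indicator hs (IsLocallyConstant.const 1)⟩

lemma chi_of_mem {s : Set X} (hs : IsClopen s) {y : X} (hy : y ∈ s) : chi hs y = 1 := by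
  show s.indicator (fun _ => (1:ℝ)) y = 1
  rw [Set.indicator_of_mem hy]

lemma chi_of_not_mem {s : Set X} (hs : IsClopen s) {y : X} (hy : y ∉ s) : chi hs y = 0 := by
  show s.indicator (fun _ => (1:ℝ)) y = 0
  rw [Set.indicator_of_notMem hy]

/-- Disjointification of a sequence of sets: membership index is unique. -/
lemma djf_unique (g : ℕ → Set X) {m n : ℕ} {y : X}
    (hm : y ∈ g m \ ⋃ k < m, g k) (hn : y ∈ g n \ ⋃ k < n, g k) : m = n := by
  rcases lt_trichotomy m n with h | h | h
  · exact absurd (Set.mem_iUnion.2 ⟨m, Set.mem_iUnion.2 ⟨h, hm.1⟩⟩) hn.2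
  · exact h
  · exact absurd (Set.mem_iUnion.2 ⟨n, Set.mem_iUnion.2 ⟨h, hn.1⟩⟩) hm.2

lemma djf_union (g : ℕ → Set X) : (⋃ n, (g n \ ⋃ k < n, g k)) = ⋃ n, g n := by
  classical
  apply Set.Subset.antisymm
  · exact Set.iUnion_mono fun n => Set.diff_subset
  · intro y hy
    rw [Set.mem_iUnion] at hy
    obtain ⟨n, hn⟩ := hy
    have hex : ∃ m, y ∈ g m := ⟨n, hn⟩
    refine Set.mem_iUnion.2 ⟨Nat.find hex, Nat.find_spec hex, ?_⟩
    intro hmem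
    rw [Set.mem_iUnion] at hmem
    obtain ⟨k, hk⟩ := hmem
    rw [Set.mem_iUnion] at hk
    obtain ⟨hklt, hkmem⟩ := hk
    exact absurd hkmem (Nat.find_min hex hklt)

lemma djf_clopen {g : ℕ → Set X} (hg : ∀ n, IsClopen (g n)) (n : ℕ) :
    IsClopen (g n \ ⋃ k < n, g k) := by
  refine (hg n).diff ?_
  have : (⋃ k < n, g k) = ⋃ k ∈ Finset.range n, g k := by
    simp [Finset.mem_range]
  rw [this]
  exact isClopen_biUnion_finset fun k _ => hg k

/-- Forward direction: ℵ₀-self-injectivity implies the P-space property. -/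
lemma forward_dir (hinj : Aleph0SelfInjective (LocallyConstant X ℝ)) :
    ∀ g : ℕ → Set X, (∀ n, IsClopen (g n)) → IsClopen (⋃ n, g n) := by
  intro g hg
  set D : ℕ → Set X := fun n => g n \ ⋃ k < n, g k with hDdef
  have hD : ∀ n, IsClopen (D n) := djf_clopen hg
  have hUD : (⋃ n, D n) = ⋃ n, g n := djf_union g
  -- weights
  set w : X → ℝ := fun y => ∑' n, (D n).indicator (fun _ => (n : ℝ)) y with hwdef
  have hwD : ∀ n, ∀ y ∈ D n, w y = n := by
    intro n y hy
    have : ∀ m, m ≠ n → (D m).indicator (fun _ => (m : ℝ)) y = 0 := by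
      intro m hmn
      refine Set.indicator_of_notMem (fun hym => hmn (djf_unique g hym hy)) _
    rw [hwdef]
    simp only
    rw [tsum_eq_single n this, Set.indicator_of_mem hy]
  have hw0 : ∀ y, y ∉ (⋃ n, g n) → w y = 0 := by
    intro y hy
    have : (fun n => (D n).indicator (fun _ => (n : ℝ)) y) = fun _ => (0 : ℝ) := by
      funext n
      refine Set.indicator_of_notMem (fun hyn => hy ?_) _
      exact hUD ▸ Set.mem_iUnion.2 ⟨n, hyn⟩
    rw [hwdef]
    simp only
    rw [this, tsum_zero]
  -- idempotents
  set e : ℕ → (LocallyConstant X ℝ) := fun n => chi (hD n) with hedef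
  set I : Ideal (LocallyConstant X ℝ) := Ideal.span (Set.range e) with hIdef
  have key : ∀ f : (LocallyConstant X ℝ), f ∈ I → IsLocallyConstant (fun y => w y * f y) := by
    intro f hf
    refine Submodule.span_induction (p := fun f _ => IsLocallyConstant (fun y => w y * f y))
      ?_ ?_ ?_ ?_ hf
    · rintro f ⟨n, rfl⟩
      show IsLocallyConstant fun y => w y * (e n) y
      have : (fun y => w y * e n y) = fun y => (n : ℝ) * e n y := by
        funext y
        by_cases hy : y ∈ D n
        · rw [hwD n y hy]
        · have h0 : e n y = 0 := chi_of_not_mem (hD n) hy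
          rw [h0, mul_zero, mul_zero]
      rw [this]
      exact (IsLocallyConstant.const (n : ℝ)).mul (e n).isLocallyConstant
    · show IsLocallyConstant fun y => w y * (0 : LocallyConstant X ℝ) y
      have : (fun y => w y * (0 : LocallyConstant X ℝ) y) = fun _ => (0 : ℝ) := by
        funext y; simp
      rw [this]
      exact IsLocallyConstant.const 0
    · intro a b _ _ ha hb
      show IsLocallyConstant fun y => w y * (a + b) y
      have : (fun y => w y * (a + b) y) = (fun y => w y * a y) + fun y => w y * b y := by
        funext y
        show w y * (a + b) y = w y * a y + w y * b y
        rw [LocallyConstant.add_apply, mul_add]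
      rw [this]
      exact ha.add hb
    · intro r a _ ha
      show IsLocallyConstant fun y => w y * (r • a) y
      have : (fun y => w y * (r • a) y) = fun y => r y * (w y * a y) := by
        funext y
        rw [smul_eq_mul, LocallyConstant.mul_apply]
        ring
      rw [this]
      exact r.isLocallyConstant.comp₂ ha (· * ·)
  set φ : I →ₗ[(LocallyConstant X ℝ)] (LocallyConstant X ℝ) :=
    { toFun := fun f => ⟨fun y => w y * (f : (LocallyConstant X ℝ)) y, key _ f.2⟩
      map_add' := by
        intro a b
        ext y
        show w y * ((a : LocallyConstant X ℝ) + (b : LocallyConstant X ℝ)) y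
          = w y * (a : LocallyConstant X ℝ) y + w y * (b : LocallyConstant X ℝ) y
        rw [LocallyConstant.add_apply, mul_add]
      map_smul' := by
        intro r a
        ext y
        show w y * (r * (a : LocallyConstant X ℝ)) y
          = r y * (w y * (a : LocallyConstant X ℝ) y)
        rw [LocallyConstant.mul_apply]
        ring } with hφdef
  obtain ⟨Φ, hΦ⟩ := hinj I ⟨Set.range e, Set.countable_range e, rfl⟩ φ
  set h : (LocallyConstant X ℝ) := Φ 1 with hhdef
  have hen : ∀ n, e n ∈ I := fun n => Ideal.subset_span ⟨n, rfl⟩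
  have hkey : ∀ n, ∀ y ∈ D n, h y = n := by
    intro n y hy
    have h1 : Φ (e n) = e n * h := by
      have h1a := map_smul Φ (e n) (1 : (LocallyConstant X ℝ))
      rw [smul_eq_mul, mul_one, smul_eq_mul] at h1a
      rw [h1a, hhdef]
    have h2 : e n * h = φ ⟨e n, hen n⟩ := by
      rw [← h1]; exact hΦ ⟨e n, hen n⟩
    have h3 := congrArg (fun t : (LocallyConstant X ℝ) => t y) h2
    simp only [LocallyConstant.mul_apply] at h3
    have h4 : (φ ⟨e n, hen n⟩ : (LocallyConstant X ℝ)) y = w y * (e n) y := rfl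
    have h5 : (e n) y = 1 := chi_of_mem (hD n) hy
    rw [h4, h5, one_mul, mul_one, hwD n y hy] at h3
    exact h3
  constructor
  · -- closed
    apply isClosed_of_closure_subset
    intro x hx
    have hlc : IsLocallyConstant (⇑h) := h.isLocallyConstant
    obtain ⟨V, hVopen, hxV, hVconst⟩ := hlc.exists_open x
    obtain ⟨y0, hy0V, hy0U⟩ := mem_closure_iff.mp hx V hVopen hxV
    rw [← hUD, Set.mem_iUnion] at hy0U
    obtain ⟨m, hy0m⟩ := hy0U
    have hxm : x ∈ D m := by
      rw [← (hD m).1.closure_eq]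
      rw [mem_closure_iff]
      intro o ho hxo
      obtain ⟨z, hzoV, hzU⟩ := mem_closure_iff.mp hx (o ∩ V) (ho.inter hVopen) ⟨hxo, hxV⟩
      rw [← hUD, Set.mem_iUnion] at hzU
      obtain ⟨m', hzm'⟩ := hzU
      have hcast : (m' : ℝ) = m := by
        rw [← hkey m' z hzm', ← hkey m y0 hy0m, hVconst z hzoV.2, hVconst y0 hy0V]
      have hmm : m' = m := Nat.cast_injective hcast
      exact ⟨z, hzoV.1, hmm ▸ hzm'⟩
    exact Set.mem_iUnion.2 ⟨m, hxm.1⟩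
  · exact isOpen_iUnion fun n => (hg n).2

/-- Backward direction: the P-space property implies ℵ₀-self-injectivity. -/
lemma backward_dir (hP : ∀ g : ℕ → Set X, (∀ n, IsClopen (g n)) → IsClopen (⋃ n, g n)) :
    Aleph0SelfInjective (LocallyConstant X ℝ) := by
  intro I hIc φ
  obtain ⟨S, hSc, hSspan⟩ := hIc
  obtain ⟨f, hf⟩ := (hSc.insert 0).exists_eq_range ⟨0, Set.mem_insert 0 S⟩
  have hIr : Ideal.span (Set.range f) = I := by
    rw [← hf]
    rw [show Ideal.span (insert 0 S) = Ideal.span S from Submodule.span_insert_zero]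
    exact hSspan
  have hfI : ∀ n, f n ∈ I := fun n =>
    hIr ▸ Ideal.subset_span (Set.mem_range_self n)
  set coz : ℕ → Set X := fun n => (⇑(f n)) ⁻¹' {0}ᶜ with hcozdef
  have hcoz : ∀ n, IsClopen (coz n) := by
    intro n
    have hlc : IsLocallyConstant (⇑(f n)) := (f n).isLocallyConstant
    constructor
    · have : (coz n)ᶜ = (⇑(f n)) ⁻¹' {0} := by
        rw [hcozdef]
        simp only
        rw [← Set.preimage_compl, compl_compl]
      exact ⟨by rw [this]; exact hlc {0}⟩
    · exact hlc _
  have hmemcoz : ∀ n y, y ∈ coz n ↔ f n y ≠ 0 := by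
    intro n y
    rw [hcozdef]
    simp
  set D : ℕ → Set X := fun n => coz n \ ⋃ k < n, coz k with hDdef
  have hD : ∀ n, IsClopen (D n) := djf_clopen hcoz
  set U : Set X := ⋃ n, coz n with hUdef
  have hUclopen : IsClopen U := hP coz hcoz
  have hUD : (⋃ n, D n) = U := djf_union coz
  -- vanishing off U
  have hvanish : ∀ r : (LocallyConstant X ℝ), r ∈ I → ∀ y, y ∉ U → r y = 0 := by
    intro r hr y hy
    rw [← hIr] at hr
    refine Submodule.span_induction (p := fun r _ => r y = 0) ?_ ?_ ?_ ?_ hr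
    · rintro r ⟨n, rfl⟩
      by_contra hne
      exact hy (Set.mem_iUnion.2 ⟨n, (hmemcoz n y).2 hne⟩)
    · rfl
    · intro a b _ _ ha hb
      rw [LocallyConstant.add_apply, ha, hb, add_zero]
    · intro c a _ ha
      show (c • a) y = 0
      rw [smul_eq_mul, LocallyConstant.mul_apply, ha, mul_zero]
  -- idempotents in I
  set e : ℕ → (LocallyConstant X ℝ) := fun n =>
    (⟨(D n).indicator (fun y => (f n y)⁻¹),
      isLC_indicator (hD n) ((f n).isLocallyConstant.comp (·⁻¹))⟩ : (LocallyConstant X ℝ)) * f n with hedef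
  have he1 : ∀ n, ∀ y ∈ D n, e n y = 1 := by
    intro n y hy
    show ((⟨(D n).indicator (fun y => (f n y)⁻¹), _⟩ : (LocallyConstant X ℝ)) * f n) y = 1
    rw [LocallyConstant.mul_apply, LocallyConstant.coe_mk, Set.indicator_of_mem hy]
    exact inv_mul_cancel₀ ((hmemcoz n y).1 hy.1)
  have he0 : ∀ n, ∀ y, y ∉ D n → e n y = 0 := by
    intro n y hy
    show ((⟨(D n).indicator (fun y => (f n y)⁻¹), _⟩ : (LocallyConstant X ℝ)) * f n) y = 0
    rw [LocallyConstant.mul_apply, LocallyConstant.coe_mk, Set.indicator_of_notMem hy,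
      zero_mul]
  have heI : ∀ n, e n ∈ I := fun n => I.mul_mem_left _ (hfI n)
  set φe : ℕ → (LocallyConstant X ℝ) := fun n => φ ⟨e n, heI n⟩ with hφedef
  -- the multiplier
  set F : X → ℝ := fun y => ∑' n, (D n).indicator (⇑(φe n)) y with hFdef
  have hFD : ∀ n, ∀ y ∈ D n, F y = φe n y := by
    intro n y hy
    have : ∀ m, m ≠ n → (D m).indicator (⇑(φe m)) y = 0 := fun m hmn =>
      Set.indicator_of_notMem (fun hym => hmn (djf_unique coz hym hy)) _
    rw [hFdef]
    simp only
    rw [tsum_eq_single n this, Set.indicator_of_mem hy]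
  have hF0 : ∀ y, y ∉ U → F y = 0 := by
    intro y hy
    have : (fun n => (D n).indicator (⇑(φe n)) y) = fun _ => (0 : ℝ) := by
      funext n
      refine Set.indicator_of_notMem (fun hyn => hy ?_) _
      exact hUD ▸ Set.mem_iUnion.2 ⟨n, hyn⟩
    rw [hFdef]
    simp only
    rw [this, tsum_zero]
  have hFlc : IsLocallyConstant F := by
    rw [IsLocallyConstant.iff_exists_open]
    intro x
    by_cases hx : x ∈ U
    · rw [← hUD, Set.mem_iUnion] at hx
      obtain ⟨n, hxn⟩ := hx
      have hlc : IsLocallyConstant (⇑(φe n)) := (φe n).isLocallyConstant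
      obtain ⟨W, hWopen, hxW, hWconst⟩ := hlc.exists_open x
      refine ⟨W ∩ D n, hWopen.inter (hD n).2, ⟨hxW, hxn⟩, fun y hy => ?_⟩
      rw [hFD n y hy.2, hFD n x hxn, hWconst y hy.1]
    · refine ⟨Uᶜ, hUclopen.compl.2, hx, fun y hy => ?_⟩
      rw [hF0 y hy, hF0 x hx]
  set Fl : (LocallyConstant X ℝ) := ⟨F, hFlc⟩ with hFldef
  refine ⟨LinearMap.mulLeft (LocallyConstant X ℝ) Fl, ?_⟩
  intro x
  rw [LinearMap.mulLeft_apply]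
  ext y
  rw [LocallyConstant.mul_apply]
  have hFly : Fl y = F y := rfl
  by_cases hy : y ∈ U
  · rw [← hUD, Set.mem_iUnion] at hy
    obtain ⟨n, hyn⟩ := hy
    have h2 : e n * φ x = (x : (LocallyConstant X ℝ)) * φe n := by
      have ha : φ ((e n : (LocallyConstant X ℝ)) • x) = e n * φ x := by rw [map_smul, smul_eq_mul]
      have hb : φ ((x : (LocallyConstant X ℝ)) • (⟨e n, heI n⟩ : I)) = (x : (LocallyConstant X ℝ)) * φe n := by
        rw [map_smul, smul_eq_mul]
      rw [← ha, ← hb]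
      congr 1
      apply Subtype.ext
      rw [Submodule.coe_smul, Submodule.coe_smul, smul_eq_mul, smul_eq_mul, mul_comm]
    have h3 := congrArg (fun t : (LocallyConstant X ℝ) => t y) h2
    simp only [LocallyConstant.mul_apply] at h3
    rw [he1 n y hyn, one_mul] at h3
    rw [hFly, hFD n y hyn, h3]
    ring
  · have hx0 : (x : (LocallyConstant X ℝ)) y = 0 := hvanish _ x.2 y hy
    have hV : IsClopen ((⇑(x : (LocallyConstant X ℝ))) ⁻¹' {0}) := by
      have hlc : IsLocallyConstant (⇑(x : (LocallyConstant X ℝ))) := (x : (LocallyConstant X ℝ)).isLocallyConstant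
      constructor
      · have : ((⇑(x : (LocallyConstant X ℝ))) ⁻¹' {0})ᶜ = (⇑(x : (LocallyConstant X ℝ))) ⁻¹' {0}ᶜ := by
          rw [← Set.preimage_compl]
        exact ⟨by rw [this]; exact hlc _⟩
      · exact hlc _
    have hc : chi hV * (x : (LocallyConstant X ℝ)) = 0 := by
      ext z
      rw [LocallyConstant.mul_apply]
      by_cases hz : z ∈ (⇑(x : (LocallyConstant X ℝ))) ⁻¹' {0}
      · rw [Set.mem_preimage, Set.mem_singleton_iff] at hz
        rw [hz, mul_zero]
        rfl
      · rw [chi_of_not_mem hV hz, zero_mul]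
        rfl
    have hcx : (chi hV) • x = (0 : I) := by
      apply Subtype.ext
      rw [Submodule.coe_smul, smul_eq_mul, hc]
      rfl
    have h2 : chi hV * φ x = 0 := by
      have := map_smul φ (chi hV) x
      rw [hcx, map_zero, smul_eq_mul] at this
      exact this.symm
    have h3 := congrArg (fun t : (LocallyConstant X ℝ) => t y) h2
    simp only [LocallyConstant.mul_apply, LocallyConstant.coe_zero, Pi.zero_apply] at h3
    rw [chi_of_mem hV (by simpa [Set.mem_preimage] using hx0), one_mul] at h3
    rw [hFly, hF0 y hy, zero_mul]
    rw [h3]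
  done

end Aux

/-- For a zero-dimensional Hausdorff space `X`, the ring `C(X, ℝ_disc)` of continuous locally
constant real functions is `ℵ₀`-self-injective if and only if `X` is a `P`-space, i.e. the
clopen sets are closed under countable unions. -/
theorem stmt13 (X : Type*) [TopologicalSpace X] [T2Space X] (hzd : ZeroDimensional X) :
    Aleph0SelfInjective (LocallyConstant X ℝ) ↔
      ∀ g : ℕ → Set X, (∀ n, IsClopen (g n)) → IsClopen (⋃ n, g n) := by
  exact ⟨forward_dir, backward_dir⟩
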